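/- Let ν > 0, ε > 0, 0 < T < ∞, let E : ℝ^d → ℝ be continuously differentiable, and let u ∈ C²([0,T]; ℝ^d) satisfy the Euler–Lagrange equation −εν u''(t) + ν u'(t) + ∇E(u(t)) = 0 for all t ∈ [0,T] together with the final condition u'(T) = 0. Then (εν/2)|u'(0)|² + ν ∫_0^T |u'(t)|² dt + E(u(T)) = E(u(0)). -/

import Mathlib

open Set

/-- inner-variation estimate, parabolic case `ρ = 0`. If
`u ∈ C²([0,T];ℝ^d)` (derivatives `u'`, `u''`) solves `−εν u'' + ν u' + ∇E(u) = 0` on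
`[0,T]` with `u'(T) = 0`, then
`(εν/2)|u'(0)|² + ν ∫_0^T |u'|² dt + E(u(T)) = E(u(0))`. -/
theorem wide_inner_variation_estimate (d : ℕ) (ν ε T : ℝ)
    (hν : 0 < ν) (hε : 0 < ε) (hT : 0 < T)
    (E : EuclideanSpace ℝ (Fin d) → ℝ) (hE : ContDiff ℝ 1 E)
    (u u' u'' : ℝ → EuclideanSpace ℝ (Fin d))
    (hu1 : ∀ t ∈ Set.Icc (0 : ℝ) T, HasDerivWithinAt u (u' t) (Set.Icc 0 T) t)
    (hu2 : ∀ t ∈ Set.Icc (0 : ℝ) T, HasDerivWithinAt u' (u'' t) (Set.Icc 0 T) t)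
    (hu2c : ContinuousOn u'' (Set.Icc 0 T))
    (hode : ∀ t ∈ Set.Icc (0 : ℝ) T,
      (-(ε * ν)) • u'' t + ν • u' t + gradient E (u t) = 0)
    (hfin : u' T = 0) :
    (ε * ν / 2) * ‖u' 0‖ ^ 2 + ν * (∫ t in (0 : ℝ)..T, ‖u' t‖ ^ 2) + E (u T) = E (u 0) := by
  set g : ℝ → ℝ := fun t => ε * ν / 2 * ‖u' t‖ ^ 2 - E (u t) with hg
  -- derivative of g on Icc
  have hderiv : ∀ t ∈ Icc (0 : ℝ) T,
      HasDerivWithinAt g (ν * ‖u' t‖ ^ 2) (Icc 0 T) t := by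
    intro t ht
    have hinner : HasDerivWithinAt (fun s => (inner ℝ (u' s) (u' s) : ℝ))
        (inner ℝ (u' t) (u'' t) + inner ℝ (u'' t) (u' t)) (Icc 0 T) t :=
      (hu2 t ht).inner ℝ (hu2 t ht)
    have hgradE : HasGradientAt E (gradient E (u t)) (u t) :=
      ((hE.differentiable one_ne_zero) (u t)).hasGradientAt
    have hEcomp : HasDerivWithinAt (fun s => E (u s))
        ((inner ℝ (gradient E (u t)) (u' t) : ℝ)) (Icc 0 T) t := by
      have := hgradE.hasFDerivAt.comp_hasDerivWithinAt t (hu1 t ht)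
      exact this
    have hsq : HasDerivWithinAt (fun s => ‖u' s‖ ^ 2)
        (2 * (inner ℝ (u'' t) (u' t) : ℝ)) (Icc 0 T) t := by
      have : (fun s => ‖u' s‖ ^ 2) = fun s => (inner ℝ (u' s) (u' s) : ℝ) := by
        funext s; rw [real_inner_self_eq_norm_sq]
      rw [this]
      convert hinner using 1
      rw [real_inner_comm (u' t) (u'' t)]; ring
    have hmain := (hsq.const_mul (ε * ν / 2)).sub hEcomp
    refine HasDerivWithinAt.congr_deriv hmain ?_
    have h := hode t ht
    have hgr : gradient E (u t) = (ε * ν) • u'' t - ν • u' t := by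
      have : gradient E (u t) = -((-(ε * ν)) • u'' t + ν • u' t) := by
        have := h; linear_combination (norm := module) this
      rw [this]; module
    rw [hgr, inner_sub_left, real_inner_smul_left, real_inner_smul_left,
      real_inner_self_eq_norm_sq]
    ring
  -- continuity of u' on Icc
  have hu'c : ContinuousOn u' (Icc 0 T) := fun t ht => (hu2 t ht).continuousWithinAt
  have huc : ContinuousOn u (Icc 0 T) := fun t ht => (hu1 t ht).continuousWithinAt
  have hgc : ContinuousOn g (Icc 0 T) := by
    apply ContinuousOn.sub
    · exact (continuousOn_const.mul ((hu'c.norm).pow 2))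
    · exact hE.continuous.comp_continuousOn huc
  have hint : IntervalIntegrable (fun t => ν * ‖u' t‖ ^ 2) MeasureTheory.volume 0 T :=
    (continuousOn_const.mul ((hu'c.norm).pow 2)).intervalIntegrable_of_Icc hT.le
  have hftc : (∫ t in (0:ℝ)..T, ν * ‖u' t‖ ^ 2) = g T - g 0 := by
    apply intervalIntegral.integral_eq_sub_of_hasDeriv_right_of_le hT.le hgc
    · intro t ht
      exact (hderiv t (Ioo_subset_Icc_self ht)).mono_of_mem_nhdsWithin
        (Icc_mem_nhdsGT_of_mem ⟨ht.1.le, ht.2⟩)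
    · exact hint
  rw [intervalIntegral.integral_const_mul] at hftc
  simp only [hg, hfin, norm_zero] at hftc
  linarith
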